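/- If f : ℝ → ℝ is continuous, f(t)/|t| is non-decreasing on (0,∞) and on (-∞,0), f(t) = o(t) as t → 0, and f(u) ≠ 0 for some u, then F(u) < (1/2) f(u) u, where F(u) = ∫₀ᵘ f(s) ds. -/
import Mathlib


open Filter

theorem stmt_0 (f : ℝ → ℝ) (hf : Continuous f)
    (hmono_pos : ∀ s t : ℝ, 0 < s → s ≤ t → f s / s ≤ f t / t)
    (hmono_neg : ∀ s t : ℝ, s ≤ t → t < 0 → f s / |s| ≤ f t / |t|)
    (hsmall : Tendsto (fun t => f t / t) (nhdsWithin 0 {(0:ℝ)}ᶜ) (nhds 0))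
    (u : ℝ) (hu : f u ≠ 0) :
    (∫ s in (0:ℝ)..u, f s) < (1/2) * f u * u := by
  have hf0 : f 0 = 0 := by
    have h1 : Tendsto (fun t => f t / t * t) (nhdsWithin 0 {(0:ℝ)}ᶜ) (nhds 0) := by
      simpa using hsmall.mul (tendsto_id.mono_left nhdsWithin_le_nhds)
    have h2 : Tendsto f (nhdsWithin 0 {(0:ℝ)}ᶜ) (nhds 0) := by
      refine h1.congr' ?_
      filter_upwards [self_mem_nhdsWithin] with t ht
      exact div_mul_cancel₀ (f t) ht
    have h3 : Tendsto f (nhdsWithin 0 {(0:ℝ)}ᶜ) (nhds (f 0)) :=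
      (hf.tendsto 0).mono_left nhdsWithin_le_nhds
    exact tendsto_nhds_unique h3 h2
  rcases lt_trichotomy u 0 with hneg | rfl | hpos
  · -- u < 0
    have hlim : Tendsto (fun t => f t / t) (nhdsWithin 0 (Set.Iio 0)) (nhds 0) :=
      hsmall.mono_left (nhdsWithin_mono _ (fun x hx => ne_of_lt hx))
    have hlim' : Tendsto (fun t => f t / |t|) (nhdsWithin 0 (Set.Iio 0)) (nhds 0) := by
      have : Tendsto (fun t => -(f t / t)) (nhdsWithin 0 (Set.Iio 0)) (nhds 0) := by
        simpa using hlim.neg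
      refine this.congr' ?_
      filter_upwards [self_mem_nhdsWithin] with t ht
      rw [abs_of_neg ht, div_neg]
    set d := f u / |u| with hd
    have hd_le : ∀ s, u ≤ s → s < 0 → d ≤ f s / |s| := fun s h1 h2 => hmono_neg u s h1 h2
    have hd_neg : d < 0 := by
      rcases lt_or_ge d 0 with h | h
      · exact h
      · exfalso
        have hd_pos : 0 < d :=
          lt_of_le_of_ne h (Ne.symm (div_ne_zero hu (abs_ne_zero.mpr (ne_of_lt hneg))))
        have hev1 : ∀ᶠ t in nhdsWithin 0 (Set.Iio 0), f t / |t| < d :=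
          hlim'.eventually (eventually_lt_nhds hd_pos)
        have hev2 : ∀ᶠ t in nhdsWithin 0 (Set.Iio 0), u < t :=
          eventually_nhdsWithin_of_eventually_nhds (eventually_gt_nhds hneg)
        have hev3 : ∀ᶠ t in nhdsWithin (0:ℝ) (Set.Iio 0), t < 0 := self_mem_nhdsWithin
        obtain ⟨t, h1, h2, h3⟩ := (hev1.and (hev2.and hev3)).exists
        exact absurd (hd_le t h2.le h3) (not_le.mpr h1)
    have hfu_neg : f u < 0 := by
      rcases lt_or_ge (f u) 0 with h | h
      · exact h
      · exact absurd (div_nonneg h (abs_nonneg u)) (not_le.mpr hd_neg)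
    set c := f u / u with hc
    have hc_pos : 0 < c := div_pos_of_neg_of_neg hfu_neg hneg
    have hune : u ≠ 0 := ne_of_lt hneg
    -- pointwise: c * s ≤ f s on Ioc u 0
    have hle : ∀ s ∈ Set.Ioc u (0:ℝ), c * s ≤ f s := by
      intro s hs
      rcases eq_or_lt_of_le hs.2 with h | h
      · simp [h, hf0]
      · have h1 := hd_le s hs.1.le h
        rw [hd, abs_of_neg hneg, abs_of_neg h,
          div_le_div_iff₀ (neg_pos.mpr hneg) (neg_pos.mpr h)] at h1
        rw [hc, div_mul_eq_mul_div, div_le_iff_of_neg hneg]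
        nlinarith
    -- strict point
    have hstrict : ∃ t ∈ Set.Icc u (0:ℝ), c * t < f t := by
      have hev1 : ∀ᶠ t in nhdsWithin 0 (Set.Iio 0), d < f t / |t| :=
        hlim'.eventually (eventually_gt_nhds hd_neg)
      have hev2 : ∀ᶠ t in nhdsWithin 0 (Set.Iio 0), u < t :=
        eventually_nhdsWithin_of_eventually_nhds (eventually_gt_nhds hneg)
      have hev3 : ∀ᶠ t in nhdsWithin (0:ℝ) (Set.Iio 0), t < 0 := self_mem_nhdsWithin
      obtain ⟨t, h1, h2, h3⟩ := (hev1.and (hev2.and hev3)).exists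
      refine ⟨t, ⟨h2.le, h3.le⟩, ?_⟩
      rw [hd, abs_of_neg hneg, abs_of_neg h3,
        div_lt_div_iff₀ (neg_pos.mpr hneg) (neg_pos.mpr h3)] at h1
      rw [hc, div_mul_eq_mul_div, div_lt_iff_of_neg hneg]
      nlinarith
    have key : (∫ s in u..(0:ℝ), c * s) < ∫ s in u..(0:ℝ), f s := by
      exact intervalIntegral.integral_lt_integral_of_continuousOn_of_le_of_exists_lt hneg
        ((continuous_const.mul continuous_id).continuousOn) hf.continuousOn hle hstrict
    have hval : (∫ s in u..(0:ℝ), c * s) = -(1/2) * f u * u := by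
      rw [intervalIntegral.integral_const_mul, integral_id, hc]
      field_simp
      ring
    rw [intervalIntegral.integral_symm u 0]
    rw [hval] at key
    linarith
  · exact absurd hf0 hu
  · -- u > 0
    have hlim : Tendsto (fun t => f t / t) (nhdsWithin 0 (Set.Ioi 0)) (nhds 0) :=
      hsmall.mono_left (nhdsWithin_mono _ (fun x hx => ne_of_gt hx))
    set c := f u / u with hc
    have hc_ub : ∀ s, 0 < s → s ≤ u → f s / s ≤ c := fun s h1 h2 => hmono_pos s u h1 h2
    have hc_pos : 0 < c := by
      rcases lt_or_ge 0 c with h | h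
      · exact h
      · exfalso
        have hc_neg : c < 0 :=
          lt_of_le_of_ne h (div_ne_zero hu (ne_of_gt hpos))
        have hev1 : ∀ᶠ t in nhdsWithin 0 (Set.Ioi 0), c < f t / t :=
          hlim.eventually (eventually_gt_nhds hc_neg)
        have hev2 : ∀ᶠ t in nhdsWithin 0 (Set.Ioi 0), t < u :=
          eventually_nhdsWithin_of_eventually_nhds (eventually_lt_nhds hpos)
        have hev3 : ∀ᶠ t in nhdsWithin (0:ℝ) (Set.Ioi 0), 0 < t := self_mem_nhdsWithin
        obtain ⟨t, h1, h2, h3⟩ := (hev1.and (hev2.and hev3)).exists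
        exact absurd (hc_ub t h3 h2.le) (not_le.mpr h1)
    have hle : ∀ s ∈ Set.Ioc (0:ℝ) u, f s ≤ c * s := by
      intro s hs
      have := hc_ub s hs.1 hs.2
      exact (div_le_iff₀ hs.1).mp this
    have hstrict : ∃ t ∈ Set.Icc (0:ℝ) u, f t < c * t := by
      have hev1 : ∀ᶠ t in nhdsWithin 0 (Set.Ioi 0), f t / t < c :=
        hlim.eventually (eventually_lt_nhds hc_pos)
      have hev2 : ∀ᶠ t in nhdsWithin 0 (Set.Ioi 0), t < u :=
        eventually_nhdsWithin_of_eventually_nhds (eventually_lt_nhds hpos)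
      have hev3 : ∀ᶠ t in nhdsWithin (0:ℝ) (Set.Ioi 0), 0 < t := self_mem_nhdsWithin
      obtain ⟨t, h1, h2, h3⟩ := (hev1.and (hev2.and hev3)).exists
      exact ⟨t, ⟨h3.le, h2.le⟩, (div_lt_iff₀ h3).mp h1⟩
    have key : (∫ s in (0:ℝ)..u, f s) < ∫ s in (0:ℝ)..u, c * s := by
      exact intervalIntegral.integral_lt_integral_of_continuousOn_of_le_of_exists_lt hpos
        hf.continuousOn ((continuous_const.mul continuous_id).continuousOn) hle hstrict
    have hval : (∫ s in (0:ℝ)..u, c * s) = (1/2) * f u * u := by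
      rw [intervalIntegral.integral_const_mul, integral_id, hc]
      field_simp
      ring
    linarith [hval ▸ key]
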